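/- If a nonincreasing positive sequence (a_k) satisfies (a_{k+1}-a_k)/a_k = o(a_{k+1}) as k \to \infty, then for every \epsilon > 0 there exists J such that for all k \ge j \ge J, a_j/a_k \le \exp( \epsilon \sum_{i=j}^{k} a_i ). -/

import Mathlib

open Filter

theorem stmt_4 (a : ℕ → ℝ)
    (hpos : ∀ k, 0 < a k) (hmono : Antitone a)
    (hsmall : Tendsto (fun k : ℕ => (a (k + 1) - a k) / (a k * a (k + 1))) atTop (nhds 0)) :
    ∀ ε > (0 : ℝ), ∃ J : ℕ, ∀ j k : ℕ, J ≤ j → j ≤ k →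
      a j / a k ≤ Real.exp (ε * ∑ i ∈ Finset.Icc j k, a i) := by
  intro ε hε
  rw [Metric.tendsto_atTop] at hsmall
  obtain ⟨J, hJ⟩ := hsmall ε hε
  refine ⟨J, ?_⟩
  intro j k hJj hjk
  have step : ∀ n, J ≤ n → a n / a (n + 1) ≤ Real.exp (ε * a n) := by
    intro n hn
    have h1 := hJ n hn
    have hpn := hpos n
    have hpn1 := hpos (n + 1)
    rw [Real.dist_eq, sub_zero] at h1
    have habs : |(a (n + 1) - a n) / (a n * a (n + 1))|
        = (a n - a (n + 1)) / (a n * a (n + 1)) := by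
      rw [abs_div, abs_of_pos (mul_pos hpn hpn1), abs_sub_comm,
        abs_of_nonneg (by linarith [hmono (Nat.le_succ n)])]
    rw [habs, div_lt_iff₀ (mul_pos hpn hpn1)] at h1
    have h3 : a n / a (n + 1) ≤ ε * a n + 1 := by
      rw [div_le_iff₀ hpn1]
      nlinarith
    exact h3.trans (Real.add_one_le_exp _)
  have main : ∀ k, j ≤ k → a j / a k ≤ Real.exp (ε * ∑ i ∈ Finset.Ico j k, a i) := by
    intro k
    induction k with
    | zero =>
      intro h
      have : j = 0 := Nat.le_zero.mp h
      subst this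
      simp [div_self (hpos 0).ne']
    | succ k ih =>
      intro h
      rcases Nat.lt_or_ge j (k + 1) with h' | h'
      · have hjk' : j ≤ k := Nat.lt_succ_iff.mp h'
        have h1 := ih hjk'
        have hs := step k (le_trans hJj hjk')
        have heq : a j / a (k + 1) = (a j / a k) * (a k / a (k + 1)) := by
          rw [div_mul_div_comm, mul_comm (a j), mul_div_mul_left _ _ (hpos k).ne']
        rw [heq, Finset.sum_Ico_succ_top hjk', mul_add, Real.exp_add]
        exact mul_le_mul h1 hs (div_nonneg (hpos k).le (hpos (k+1)).le) (Real.exp_nonneg _)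
      · have : j = k + 1 := le_antisymm h h'
        subst this
        simp [div_self (hpos (k + 1)).ne']
  refine (main k hjk).trans (Real.exp_le_exp.mpr ?_)
  apply mul_le_mul_of_nonneg_left _ hε.le
  exact Finset.sum_le_sum_of_subset_of_nonneg Finset.Ico_subset_Icc_self
    (fun i _ _ => (hpos i).le)
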